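/- Let A be an arrangement of loads {1,...,n} on an r × c grid with n = rc, and let k ≥ 0. Suppose some load x is neither in the bottom row nor adjacent to any load y with y ≤ x - (k+1). Then there exists a k-bounded perturbation D' of (1, ..., n) in which x is not preceded by any of its grid-neighbors; i.e., x appears in D' before every load adjacent to x in A. -/

import Mathlib

lemma mem_range1 {s len v : ℕ} : v ∈ List.range' s len ↔ s ≤ v ∧ v < s + len := by
  rw [List.mem_range']
  constructor
  · rintro ⟨i, hi, rfl⟩; omega
  · rintro ⟨h1, h2⟩; exact ⟨v - s, by omega, by omega⟩

lemma idx_range1 : ∀ (len s v : ℕ), s ≤ v → v < s + len →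
    (List.range' s len).idxOf v = v - s
  | 0, _, _, h1, h2 => by omega
  | len+1, s, v, h1, h2 => by
    rw [List.range'_succ]
    rcases eq_or_ne v s with rfl | hne
    · simp
    · rw [List.idxOf_cons_ne _ (Ne.symm hne),
        idx_range1 len (s+1) v (by omega) (by omega)]
      omega

/-- T is a k-bounded perturbation of S: T is a permutation of S and whenever the pair
of positions i < j of S is inverted in T (i.e. S's j-th entry appears before its i-th
entry in T), then j - i <= k. -/
def IsKBoundedPerturbation {α : Type*} [DecidableEq α] (k : ℕ) (S T : List α) : Prop :=
  T.Perm S ∧ ∀ i j : Fin S.length, (i : ℕ) < (j : ℕ) →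
    T.idxOf (S.get j) < T.idxOf (S.get i) → (j : ℕ) - (i : ℕ) ≤ k

/-- 4-neighbor adjacency of grid cells (row, column). -/
def AdjCell (a b : ℕ × ℕ) : Prop :=
  (a.1 = b.1 ∧ (a.2 = b.2 + 1 ∨ b.2 = a.2 + 1)) ∨
  (a.2 = b.2 ∧ (a.1 = b.1 + 1 ∨ b.1 = a.1 + 1))

/-- The cell lies in the r x c grid, rows 1..r (row 1 is the bottom row), columns 1..c. -/
def InGrid (r c : ℕ) (a : ℕ × ℕ) : Prop :=
  1 ≤ a.1 ∧ a.1 ≤ r ∧ 1 ≤ a.2 ∧ a.2 ≤ c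

/-- 'only if' direction of the robust adjacency conditions: if load x is
neither in the bottom row nor adjacent to any load y ≤ x - (k+1), then some k-bounded
perturbation of (1,...,n) places x before all of its grid-neighbors. -/
theorem stmt10 (r c n k : ℕ) (hn : n = r * c) (pos : ℕ → ℕ × ℕ)
    (hinj : Set.InjOn pos (Set.Icc 1 n))
    (hgrid : ∀ x ∈ Set.Icc 1 n, InGrid r c (pos x))
    (x : ℕ) (hx : x ∈ Set.Icc 1 n) (hxrow : (pos x).1 ≠ 1)
    (hnoadj : ∀ y ∈ Set.Icc 1 n, AdjCell (pos x) (pos y) → ¬ (y + (k + 1) ≤ x)) :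
    ∃ D' : List ℕ, IsKBoundedPerturbation k (List.range' 1 n) D' ∧
      ∀ y ∈ Set.Icc 1 n, y ≠ x → AdjCell (pos x) (pos y) → D'.idxOf x < D'.idxOf y := by
  obtain ⟨hx1, hxn⟩ := Set.mem_Icc.mp hx
  set t := min k (x - 1) with htdef
  have ht1 : t ≤ k := min_le_left _ _
  have ht2 : t ≤ x - 1 := min_le_right _ _
  have htor : t = k ∨ t = x - 1 := min_choice _ _
  set a := x - 1 - t with hadef
  set D' : List ℕ :=
    List.range' 1 a ++ x :: (List.range' (1 + a) t ++ List.range' (x + 1) (n - x))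
    with hD
  have hxA : x ∉ List.range' 1 a := by rw [mem_range1]; omega
  have hidx_x : D'.idxOf x = a := by
    rw [hD, List.idxOf_append_of_notMem hxA, List.idxOf_cons_self,
      List.length_range', Nat.add_zero]
  have hidx : ∀ v, 1 ≤ v → v ≤ n → v ≠ x →
      D'.idxOf v = if 1 + a ≤ v ∧ v < x then v else v - 1 := by
    intro v h1 h2 h3
    by_cases hv : v < 1 + a
    · rw [hD, List.idxOf_append_of_mem (mem_range1.2 ⟨h1, hv⟩),
        idx_range1 a 1 v h1 hv, if_neg (by omega)]
    · push_neg at hv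
      rw [hD, List.idxOf_append_of_notMem (by rw [mem_range1]; omega),
        List.length_range', List.idxOf_cons_ne _ (Ne.symm h3)]
      by_cases hv2 : v < x
      · rw [List.idxOf_append_of_mem (mem_range1.2 ⟨hv, by omega⟩),
          idx_range1 t (1 + a) v hv (by omega), if_pos ⟨hv, hv2⟩]
        omega
      · push_neg at hv2
        rw [List.idxOf_append_of_notMem (by rw [mem_range1]; omega),
          List.length_range', idx_range1 (n - x) (x + 1) v (by omega) (by omega),
          if_neg (by omega)]
        omega
  have e1 : (List.range' 1 a ++ List.range' (1 + a) t)
      ++ (x :: List.range' (x + 1) (n - x)) = List.range' 1 n := by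
    rw [List.range'_append_1, ← List.range'_succ]
    have hx' : x = 1 + (a + t) := by omega
    rw [hx', List.range'_append_1]
    congr 1
    omega
  have hperm : D'.Perm (List.range' 1 n) := by
    rw [← e1, hD, List.append_assoc]
    exact (List.perm_middle (a := x) (l₁ := List.range' (1 + a) t)
      (l₂ := List.range' (x + 1) (n - x))).symm.append_left (List.range' 1 a)
  refine ⟨D', ⟨hperm, ?_⟩, ?_⟩
  · intro i j hij hlt
    have hi : (i : ℕ) < n := by simpa using i.isLt
    have hj : (j : ℕ) < n := by simpa using j.isLt
    have hgi : (List.range' 1 n).get i = 1 + (i : ℕ) := by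
      simp [List.getElem_range']
    have hgj : (List.range' 1 n).get j = 1 + (j : ℕ) := by
      simp [List.getElem_range']
    rw [hgi, hgj] at hlt
    rcases eq_or_ne (1 + (j : ℕ)) x with hjx | hjx
    · have hix : 1 + (i : ℕ) ≠ x := by omega
      rw [hjx, hidx_x, hidx _ (by omega) (by omega) hix] at hlt
      split_ifs at hlt with h <;> omega
    · rcases eq_or_ne (1 + (i : ℕ)) x with hix | hix
      · rw [hix, hidx_x, hidx _ (by omega) (by omega) hjx] at hlt
        split_ifs at hlt with h <;> omega
      · rw [hidx _ (by omega) (by omega) hjx, hidx _ (by omega) (by omega) hix] at hlt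
        split_ifs at hlt with h1 h2 h2 <;> omega
  · intro y hy hyx hadj
    obtain ⟨hy1, hy2⟩ := Set.mem_Icc.mp hy
    have hk := hnoadj y hy hadj
    rw [hidx_x, hidx y hy1 hy2 hyx]
    split_ifs with h <;> omega
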